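/- Let g, h : ℝⁿ → ℝ be polynomials with g⁻¹(0) ⊆ h⁻¹(0) and K̃_∞(g) = ∅. Assume that for all sufficiently small |r| > 0, each level set h⁻¹(±r) is either empty or a smooth hypersurface and K̃_∞(g|_{{h = ±r}}) = ∅. Then there is no sequence of the first type for (g,h): there do not exist δ > 0 and a sequence {x^k} ⊂ ℝⁿ with ‖x^k‖ → ∞, g(x^k) → 0, and |h(x^k)| ≥ δ. -/

import Mathlib

open MvPolynomial Filter Topology

/-- The gradient of a polynomial function. -/
noncomputable def polyGrad {n : ℕ} (f : MvPolynomial (Fin n) ℝ) (x : Fin n → ℝ) :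
    Fin n → ℝ :=
  fun j => eval x (pderiv j f)

/-- The gradient of `g` restricted to a level set of `h`: the orthogonal projection of
`∇g(x)` onto the tangent space of `{h = r}` at `x` (the orthogonal complement of
`∇h(x)`). -/
noncomputable def restrictedGrad {n : ℕ} (g h : MvPolynomial (Fin n) ℝ)
    (x : Fin n → ℝ) : Fin n → ℝ :=
  polyGrad g x -
    ((∑ j, polyGrad g x j * polyGrad h x j) / (∑ j, polyGrad h x j * polyGrad h x j)) •
      polyGrad h x

noncomputable def gradCLM {n : ℕ} (f : MvPolynomial (Fin n) ℝ) (x : Fin n → ℝ) :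
    (Fin n → ℝ) →L[ℝ] ℝ :=
  ∑ j, eval x (pderiv j f) • (ContinuousLinearMap.proj j : (Fin n → ℝ) →L[ℝ] ℝ)

lemma gradCLM_apply {n : ℕ} (f : MvPolynomial (Fin n) ℝ) (x v : Fin n → ℝ) :
    gradCLM f x v = ∑ j, polyGrad f x j * v j := by
  simp [gradCLM, polyGrad, ContinuousLinearMap.sum_apply, smul_eq_mul]

lemma hasFDerivAt_eval {n : ℕ} (f : MvPolynomial (Fin n) ℝ) (x : Fin n → ℝ) :
    HasFDerivAt (fun y => eval y f) (gradCLM f x) x := by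
  induction f using MvPolynomial.induction_on with
  | C a =>
      have : gradCLM (C a : MvPolynomial (Fin n) ℝ) x = 0 := by
        ext v; simp [gradCLM]
      rw [this]
      simpa using (hasFDerivAt_const (a : ℝ) x)
  | add p q hp hq =>
      have : gradCLM (p + q) x = gradCLM p x + gradCLM q x := by
        ext v; simp [gradCLM, Finset.sum_add_distrib, add_smul, add_mul,
          ContinuousLinearMap.sum_apply, smul_eq_mul]
      rw [this]
      simp only [map_add]
      exact hp.add hq
  | mul_X p i hp =>
      have h2 : HasFDerivAt (fun y : Fin n → ℝ => y i)
          (ContinuousLinearMap.proj i : (Fin n → ℝ) →L[ℝ] ℝ) x :=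
        (ContinuousLinearMap.proj i : (Fin n → ℝ) →L[ℝ] ℝ).hasFDerivAt
      have key := hp.mul h2
      have : gradCLM (p * X i) x
          = eval x p • (ContinuousLinearMap.proj i : (Fin n → ℝ) →L[ℝ] ℝ)
            + x i • gradCLM p x := by
        ext v
        simp only [gradCLM, pderiv_mul, pderiv_X, ContinuousLinearMap.sum_apply,
          ContinuousLinearMap.smul_apply, ContinuousLinearMap.proj_apply,
          ContinuousLinearMap.add_apply, map_add, map_mul, eval_X, smul_eq_mul,
          Finset.mul_sum, Pi.single_apply, apply_ite (eval x), map_one, map_zero,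
          mul_ite, mul_one, mul_zero, ite_mul, zero_mul, add_mul]
        rw [Finset.sum_add_distrib, Finset.sum_ite_eq Finset.univ i
          (fun j => (eval x) p * v j)]
        simp only [Finset.mem_univ, if_true]
        rw [add_comm]
        congr 1
        apply Finset.sum_congr rfl; intro j _; ring
      rw [this]
      simp only [map_mul, eval_X]
      exact key

lemma continuous_evalPoly {n : ℕ} (f : MvPolynomial (Fin n) ℝ) :
    Continuous fun y : Fin n → ℝ => eval y f :=
  continuous_iff_continuousAt.2 fun x => (hasFDerivAt_eval f x).continuousAt

lemma line_hasDerivAt {n : ℕ} (f : MvPolynomial (Fin n) ℝ) (y v : Fin n → ℝ) :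
    HasDerivAt (fun t : ℝ => eval (y + t • v) f) (∑ j, polyGrad f y j * v j) 0 := by
  have h1 : HasDerivAt (fun t : ℝ => y + t • v) v 0 := by
    simpa using ((hasDerivAt_id (0 : ℝ)).smul_const v).const_add y
  have h2 := (hasFDerivAt_eval f (y + (0 : ℝ) • v)).comp_hasDerivAt 0 h1
  simp [gradCLM_apply] at h2
  exact h2

/-- dot product notation -/
noncomputable def dp {n : ℕ} (u v : Fin n → ℝ) : ℝ := ∑ j, u j * v j

lemma dp_nonneg {n : ℕ} (u : Fin n → ℝ) : 0 ≤ dp u u :=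
  Finset.sum_nonneg fun j _ => mul_self_nonneg _

lemma norm_le_sqrt_dp {n : ℕ} (u : Fin n → ℝ) : ‖u‖ ≤ Real.sqrt (dp u u) := by
  rw [pi_norm_le_iff_of_nonneg (Real.sqrt_nonneg _)]
  intro j
  rw [Real.norm_eq_abs, ← Real.sqrt_sq_eq_abs]
  apply Real.sqrt_le_sqrt
  rw [sq]
  exact Finset.single_le_sum (f := fun j => u j * u j)
    (fun j _ => mul_self_nonneg _) (Finset.mem_univ j)

lemma norm_le_of_dp_le {n : ℕ} (u : Fin n → ℝ) (σ : ℝ) (hσ : 0 ≤ σ)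
    (h : dp u u ≤ σ * ‖u‖) : ‖u‖ ≤ σ := by
  have h1 := norm_le_sqrt_dp u
  have h2 := dp_nonneg u
  have h3 := Real.sq_sqrt h2
  have h4 := Real.sqrt_nonneg (dp u u)
  nlinarith [norm_nonneg u]

lemma deriv_ge {ψ : ℝ → ℝ} {d σ : ℝ} (hψ : HasDerivAt ψ d 0)
    (h : ∀ᶠ t in 𝓝[>] (0 : ℝ), ψ 0 - σ * t ≤ ψ t) : -σ ≤ d := by
  have h1 : Tendsto (slope ψ 0) (𝓝[>] (0 : ℝ)) (𝓝 d) :=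
    (hasDerivAt_iff_tendsto_slope.1 hψ).mono_left
      (nhdsWithin_mono _ fun t ht => ne_of_gt ht)
  refine ge_of_tendsto h1 ?_
  filter_upwards [h, self_mem_nhdsWithin] with t ht ht0
  have ht0' : (0 : ℝ) < t := ht0
  have : slope ψ 0 t = (ψ t - ψ 0) / t := by simp [slope_def_field]
  rw [this, le_div_iff₀ ht0']
  linarith

lemma eventually_pos_of_deriv_pos {ψ : ℝ → ℝ} {d : ℝ} (hψ : HasDerivAt ψ d 0)
    (hd : 0 < d) : ∀ᶠ t in 𝓝[>] (0 : ℝ), ψ 0 < ψ t := by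
  have h1 : Tendsto (slope ψ 0) (𝓝[>] (0 : ℝ)) (𝓝 d) :=
    (hasDerivAt_iff_tendsto_slope.1 hψ).mono_left
      (nhdsWithin_mono _ fun t ht => ne_of_gt ht)
  have h2 : ∀ᶠ t in 𝓝[>] (0 : ℝ), 0 < slope ψ 0 t :=
    h1.eventually (eventually_gt_nhds hd)
  filter_upwards [h2, self_mem_nhdsWithin] with t hs ht0
  have ht0' : (0 : ℝ) < t := ht0
  have : slope ψ 0 t = (ψ t - ψ 0) / t := by simp [slope_def_field]
  rw [this] at hs
  have h3 : 0 < ψ t - ψ 0 := by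
    have := mul_pos hs ht0'
    rwa [div_mul_cancel₀ _ (ne_of_gt ht0')] at this
  linarith

lemma ekeland_lite {n : ℕ} (f : (Fin n → ℝ) → ℝ) (C : Set (Fin n → ℝ))
    (hf : Continuous f) (hC : IsClosed C) (hf0 : ∀ z ∈ C, 0 ≤ f z)
    (x : Fin n → ℝ) (hx : x ∈ C) (ε lam : ℝ) (hε : 0 < ε) (hlam : 0 < lam)
    (hfx : f x ≤ ε) :
    ∃ y ∈ C, f y ≤ f x ∧ ‖y - x‖ ≤ lam ∧
      ∀ z ∈ C, f y - ε / lam * ‖z - y‖ ≤ f z := by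
  set σ := ε / lam with hσdef
  have hσ : 0 ≤ σ := le_of_lt (div_pos hε hlam)
  set K := C ∩ Metric.closedBall x lam with hK
  have hKc : IsCompact K := (isCompact_closedBall x lam).inter_left hC
  have hKne : K.Nonempty := ⟨x, hx, Metric.mem_closedBall_self (le_of_lt hlam)⟩
  have hφc : ContinuousOn (fun z => f z + σ * ‖z - x‖) K :=
    (hf.add (continuous_const.mul ((continuous_id.sub continuous_const).norm))).continuousOn
  obtain ⟨y, hyK, hymin⟩ := hKc.exists_isMinOn hKne hφc
  have hyC : y ∈ C := hyK.1
  have hyB : ‖y - x‖ ≤ lam := by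
    have := hyK.2
    rwa [Metric.mem_closedBall, dist_eq_norm] at this
  have hfy : f y + σ * ‖y - x‖ ≤ f x := by
    simpa using hymin ⟨hx, Metric.mem_closedBall_self (le_of_lt hlam)⟩
  have hfy' : f y ≤ f x := by nlinarith [norm_nonneg (y - x)]
  refine ⟨y, hyC, hfy', hyB, ?_⟩
  intro z hzC
  by_cases hz : z ∈ Metric.closedBall x lam
  · have h1 : f y + σ * ‖y - x‖ ≤ f z + σ * ‖z - x‖ := hymin ⟨hzC, hz⟩
    have h2 : ‖z - x‖ ≤ ‖z - y‖ + ‖y - x‖ := by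
      simpa using norm_sub_le_norm_sub_add_norm_sub z y x
    nlinarith
  · have hzfar : lam < ‖z - x‖ := by
      rw [Metric.mem_closedBall, dist_eq_norm, not_le] at hz
      exact hz
    have h2 : ‖z - x‖ ≤ ‖z - y‖ + ‖y - x‖ := by
      simpa using norm_sub_le_norm_sub_add_norm_sub z y x
    have h3 : σ * lam = ε := div_mul_cancel₀ ε (ne_of_gt hlam)
    have h4 : 0 ≤ f z := hf0 z hzC
    nlinarith

/-- directional bound at an "Ekeland point". -/
lemma dir_bound {n : ℕ} (g : MvPolynomial (Fin n) ℝ) (σ s : ℝ) (y v : Fin n → ℝ)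
    (hs : s = 1 ∨ s = -1) (hsG : 0 < s * eval y g)
    (hmem : ∀ᶠ t in 𝓝[>] (0 : ℝ), |eval y g| - σ * ‖(y + t • v) - y‖ ≤ |eval (y + t • v) g|) :
    -(σ * ‖v‖) ≤ s * ∑ j, polyGrad g y j * v j := by
  have hd : HasDerivAt (fun t : ℝ => s * eval (y + t • v) g)
      (s * ∑ j, polyGrad g y j * v j) 0 := (line_hasDerivAt g y v).const_mul s
  apply deriv_ge hd
  -- eventually sign is constant
  have hc : ContinuousAt (fun t : ℝ => s * eval (y + t • v) g) 0 := hd.continuousAt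
  have hpos : ∀ᶠ t in 𝓝 (0 : ℝ), 0 < s * eval (y + t • v) g :=
    continuousAt_const.eventually_lt hc (by simpa using hsG)
  have habs : ∀ a : ℝ, 0 < s * a → |a| = s * a := by
    intro a ha
    rcases hs with rfl | rfl
    · rw [one_mul] at ha ⊢; exact abs_of_pos ha
    · rw [neg_one_mul] at ha ⊢
      exact abs_of_neg (by linarith)
  filter_upwards [hmem, hpos.filter_mono nhdsWithin_le_nhds, self_mem_nhdsWithin]
    with t hm hp ht0
  have ht0' : (0 : ℝ) < t := ht0
  have e1 : |eval (y + t • v) g| = s * eval (y + t • v) g := habs _ hp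
  have e2 : |eval y g| = s * eval y g := habs _ hsG
  have e3 : ‖(y + t • v) - y‖ = t * ‖v‖ := by
    rw [add_sub_cancel_left, norm_smul, Real.norm_eq_abs, abs_of_pos ht0']
  rw [e1, e2, e3] at hm
  simp only [zero_smul, add_zero]
  nlinarith

lemma sign_spec {a : ℝ} (ha : a ≠ 0) :
    ∃ s : ℝ, (s = 1 ∨ s = -1) ∧ 0 < s * a := by
  rcases lt_or_gt_of_ne ha with h | h
  · exact ⟨-1, Or.inr rfl, by nlinarith⟩
  · exact ⟨1, Or.inl rfl, by nlinarith⟩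

lemma case_interior {n : ℕ} (g h : MvPolynomial (Fin n) ℝ) (r σ : ℝ)
    (y : Fin n → ℝ) (hσ : 0 ≤ σ) (hy : r < |eval y h|) (hGy : eval y g ≠ 0)
    (hek : ∀ z, r ≤ |eval z h| → |eval y g| - σ * ‖z - y‖ ≤ |eval z g|) :
    ‖polyGrad g y‖ ≤ σ := by
  obtain ⟨s, hs, hsG⟩ := sign_spec hGy
  have key : ∀ v : Fin n → ℝ, -(σ * ‖v‖) ≤ s * ∑ j, polyGrad g y j * v j := by
    intro v
    apply dir_bound g σ s y v hs hsG
    have hcont : ContinuousAt (fun t : ℝ => |eval (y + t • v) h|) 0 := by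
      apply ContinuousAt.abs
      exact ((continuous_evalPoly h).comp
        (continuous_const.add (continuous_id.smul continuous_const))).continuousAt
    have hmem : ∀ᶠ t in 𝓝 (0 : ℝ), r < |eval (y + t • v) h| :=
      continuousAt_const.eventually_lt hcont (by simpa using hy)
    filter_upwards [hmem.filter_mono nhdsWithin_le_nhds] with t hm
    exact hek _ (le_of_lt hm)
  have hkey := key ((-s) • polyGrad g y)
  have hs2 : s * s = 1 := by rcases hs with rfl | rfl <;> norm_num
  have e1 : s * ∑ j, polyGrad g y j * ((-s) • polyGrad g y) j
      = -(dp (polyGrad g y) (polyGrad g y)) := by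
    simp only [Pi.smul_apply, smul_eq_mul, dp, Finset.mul_sum, ← Finset.sum_neg_distrib]
    apply Finset.sum_congr rfl
    intro j _
    nlinarith [hs2]
  have e2 : ‖(-s) • polyGrad g y‖ = ‖polyGrad g y‖ := by
    rw [norm_smul, Real.norm_eq_abs]
    rcases hs with rfl | rfl <;> norm_num
  rw [e1, e2] at hkey
  exact norm_le_of_dp_le _ _ hσ (by linarith)

lemma dp_eq {n : ℕ} (u v : Fin n → ℝ) : dp u v = ∑ j, u j * v j := rfl

lemma dp_comm {n : ℕ} (u v : Fin n → ℝ) : dp u v = dp v u := by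
  unfold dp; apply Finset.sum_congr rfl; intros; ring

lemma dp_sub_right {n : ℕ} (u v w : Fin n → ℝ) :
    dp u (v - w) = dp u v - dp u w := by
  unfold dp
  rw [← Finset.sum_sub_distrib]
  apply Finset.sum_congr rfl; intros; simp [Pi.sub_apply]; ring

lemma dp_smul_right {n : ℕ} (c : ℝ) (u v : Fin n → ℝ) :
    dp u (c • v) = c * dp u v := by
  unfold dp
  rw [Finset.mul_sum]
  apply Finset.sum_congr rfl; intros; simp [Pi.smul_apply, smul_eq_mul]; ring

lemma dp_add_right {n : ℕ} (u v w : Fin n → ℝ) :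
    dp u (v + w) = dp u v + dp u w := by
  unfold dp
  rw [← Finset.sum_add_distrib]
  apply Finset.sum_congr rfl; intros; simp [Pi.add_apply]; ring

lemma dp_pos_of_ne {n : ℕ} (u : Fin n → ℝ) (hu : u ≠ 0) : 0 < dp u u := by
  obtain ⟨j, hj⟩ := Function.ne_iff.1 hu
  have h1 : 0 < u j * u j := mul_self_pos.2 hj
  have h2 := Finset.single_le_sum (f := fun j => u j * u j)
    (fun i _ => mul_self_nonneg _) (Finset.mem_univ j)
  unfold dp
  exact lt_of_lt_of_le h1 h2

lemma case_boundary {n : ℕ} (g h : MvPolynomial (Fin n) ℝ) (σ : ℝ)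
    (y : Fin n → ℝ) (hσ : 0 ≤ σ) (hHy : eval y h ≠ 0)
    (hN : polyGrad h y ≠ 0) (hGy : eval y g ≠ 0)
    (hek : ∀ z, |eval y h| ≤ |eval z h| → |eval y g| - σ * ‖z - y‖ ≤ |eval z g|) :
    ‖restrictedGrad g h y‖ ≤ σ := by
  obtain ⟨s, hs, hsG⟩ := sign_spec hGy
  obtain ⟨sh, hsh, hshH⟩ := sign_spec hHy
  set w := polyGrad g y with hw
  set N := polyGrad h y with hNdef
  have hNN : 0 < dp N N := dp_pos_of_ne N hN
  set c : ℝ := dp w N / dp N N with hc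
  have hwT : restrictedGrad g h y = w - c • N := by
    rw [restrictedGrad, hc, dp_eq, dp_eq]
  set wT := w - c • N with hwTdef
  have hNwT : dp N wT = 0 := by
    rw [hwTdef, dp_sub_right, dp_smul_right, hc, dp_comm N w,
      div_mul_cancel₀ _ (ne_of_gt hNN)]
    ring
  have hwwT : dp w wT = dp wT wT := by
    have : dp wT wT = dp wT w - c * dp wT N := by
      rw [hwTdef]
      conv_lhs => rw [dp_sub_right, dp_smul_right]
    rw [this, dp_comm wT w, dp_comm wT N, hNwT]
    ring
  -- the directional inequality for admissible directions
  have key : ∀ v : Fin n → ℝ, 0 < sh * dp N v → -(σ * ‖v‖) ≤ s * dp w v := by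
    intro v hv
    have hd := line_hasDerivAt h y v
    have hdN : HasDerivAt (fun t : ℝ => eval (y + t • v) h) (dp N v) 0 := hd
    apply dir_bound g σ s y v hs hsG
    have hmem : ∀ᶠ t in 𝓝[>] (0 : ℝ), |eval y h| ≤ |eval (y + t • v) h| := by
      rcases hsh with rfl | rfl
      · have hH0 : 0 < eval y h := by linarith [hshH]
        have hdv : 0 < dp N v := by linarith [hv]
        have := eventually_pos_of_deriv_pos hdN hdv
        filter_upwards [this] with t ht
        have h0 : eval (y + (0:ℝ) • v) h = eval y h := by simp
        rw [h0] at ht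
        rw [abs_of_pos hH0]
        calc eval y h ≤ eval (y + t • v) h := le_of_lt ht
          _ ≤ |eval (y + t • v) h| := le_abs_self _
      · have hH0 : eval y h < 0 := by nlinarith [hshH]
        have hdv : dp N v < 0 := by nlinarith [hv]
        have := eventually_pos_of_deriv_pos (hdN.neg) (by linarith : 0 < -dp N v)
        filter_upwards [this] with t ht
        have h0 : eval (y + (0:ℝ) • v) h = eval y h := by simp
        simp only [Pi.neg_apply] at ht
        rw [h0] at ht
        rw [abs_of_neg hH0]
        calc -eval y h ≤ -eval (y + t • v) h := le_of_lt ht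
          _ ≤ |eval (y + t • v) h| := neg_le_abs _
    filter_upwards [hmem] with t hm
    exact hek _ hm
  -- τ-perturbation argument
  have hs2 : s * s = 1 := by rcases hs with rfl | rfl <;> norm_num
  have hsh2 : sh * sh = 1 := by rcases hsh with rfl | rfl <;> norm_num
  have hsabs : |s| = 1 := by rcases hs with rfl | rfl <;> norm_num
  have hshabs : |sh| = 1 := by rcases hsh with rfl | rfl <;> norm_num
  set C0 : ℝ := σ * ‖N‖ + |dp w N| with hC0
  have hC0nn : 0 ≤ C0 := by positivity
  have main : ∀ τ : ℝ, 0 < τ → dp wT wT ≤ σ * ‖wT‖ + τ * C0 := by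
    intro τ hτ
    set v : Fin n → ℝ := (-s) • wT + (τ * sh) • N with hv
    have hadm : 0 < sh * dp N v := by
      rw [hv, dp_add_right, dp_smul_right, dp_smul_right, hNwT]
      have : sh * (-s * 0 + τ * sh * dp N N) = τ * (sh * sh) * dp N N := by ring
      rw [this, hsh2]
      nlinarith
    have hkey := key v hadm
    have e1 : s * dp w v = -(dp wT wT) + τ * (s * sh) * dp w N := by
      rw [hv, dp_add_right, dp_smul_right, dp_smul_right, hwwT]
      linear_combination (-(dp wT wT)) * hs2
    have e2 : ‖v‖ ≤ ‖wT‖ + τ * ‖N‖ := by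
      rw [hv]
      refine le_trans (norm_add_le _ _) ?_
      rw [norm_smul, norm_smul, Real.norm_eq_abs, Real.norm_eq_abs, abs_neg, hsabs,
        abs_mul, hshabs, abs_of_pos hτ]
      simp
    have e3 : (s * sh) * dp w N ≤ |dp w N| := by
      rcases hs with rfl | rfl <;> rcases hsh with rfl | rfl <;>
        simp [le_abs_self, neg_le_abs]
    rw [e1] at hkey
    have e4 : σ * ‖v‖ ≤ σ * (‖wT‖ + τ * ‖N‖) := mul_le_mul_of_nonneg_left e2 hσ
    rw [hC0]
    nlinarith
  have hfin : dp wT wT ≤ σ * ‖wT‖ := by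
    refine le_of_forall_pos_le_add ?_
    intro ε hε
    have hτ : 0 < ε / (C0 + 1) := div_pos hε (by linarith)
    have h1 := main _ hτ
    have h2 : ε / (C0 + 1) * C0 ≤ ε := by
      rw [div_mul_eq_mul_div, div_le_iff₀ (by linarith : (0:ℝ) < C0 + 1)]
      nlinarith
    linarith
  rw [hwT]
  exact norm_le_of_dp_le _ _ hσ hfin


/-- Suppose `g⁻¹(0) ⊆ h⁻¹(0)`, `K̃_∞(g) = ∅`, and for all sufficiently small `|r| > 0`
the level set `h⁻¹(r)` is empty or a smooth hypersurface and
`K̃_∞(g|_{{h = r}}) = ∅`.  Then there is no sequence of the first type for `(g, h)`. -/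

theorem no_first_type_sequence (n : ℕ) (g h : MvPolynomial (Fin n) ℝ)
    (hzero : ∀ x : Fin n → ℝ, eval x g = 0 → eval x h = 0)
    (hKg : ¬ ∃ (y : ℝ) (x : ℕ → Fin n → ℝ),
      Tendsto (fun k => ‖x k‖) atTop atTop ∧
      Tendsto (fun k => eval (x k) g) atTop (𝓝 y) ∧
      Tendsto (fun k => ‖polyGrad g (x k)‖) atTop (𝓝 0))
    (hlev : ∃ r0 : ℝ, 0 < r0 ∧ ∀ r : ℝ, r ≠ 0 → |r| < r0 →
      (∀ x : Fin n → ℝ, eval x h = r → polyGrad h x ≠ 0) ∧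
      ¬ ∃ (t : ℝ) (x : ℕ → Fin n → ℝ),
        (∀ k, eval (x k) h = r) ∧
        Tendsto (fun k => ‖x k‖) atTop atTop ∧
        Tendsto (fun k => eval (x k) g) atTop (𝓝 t) ∧
        Tendsto (fun k => ‖restrictedGrad g h (x k)‖) atTop (𝓝 0)) :
    ¬ ∃ (δ : ℝ) (x : ℕ → Fin n → ℝ), 0 < δ ∧
      Tendsto (fun k => ‖x k‖) atTop atTop ∧
      Tendsto (fun k => eval (x k) g) atTop (𝓝 0) ∧
      ∀ k, δ ≤ |eval (x k) h| := by
  rintro ⟨δ, x, hδ, hxnorm, hxg, hxh⟩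
  obtain ⟨r0, hr0, hlev'⟩ := hlev
  set r : ℝ := min (δ / 2) (r0 / 2) with hrdef
  have hr_pos : 0 < r := lt_min (by linarith) (by linarith)
  have hr_le_δ : r ≤ δ := le_trans (min_le_left _ _) (by linarith)
  have hr_lt_r0 : r < r0 := lt_of_le_of_lt (min_le_right _ _) (by linarith)
  set C : Set (Fin n → ℝ) := {z | r ≤ |eval z h|} with hCdef
  have hCclosed : IsClosed C := isClosed_le continuous_const (continuous_evalPoly h).abs
  set lam : ℕ → ℝ := fun k => 1 + ‖x k‖ / 2 with hlamdef
  set ε : ℕ → ℝ := fun k => |eval (x k) g| + 1 / (k + 1 : ℝ) with hεdef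
  have hlam1 : ∀ k, 1 ≤ lam k := by
    intro k
    have : (0:ℝ) ≤ ‖x k‖ := norm_nonneg _
    simp only [hlamdef]
    linarith
  have hlam0 : ∀ k, 0 < lam k := fun k => lt_of_lt_of_le one_pos (hlam1 k)
  have hε0 : ∀ k, 0 < ε k := by
    intro k
    have h1 : (0:ℝ) < 1 / (k + 1 : ℝ) := by positivity
    have h2 := abs_nonneg (eval (x k) g)
    simp only [hεdef]
    linarith
  set σ : ℕ → ℝ := fun k => ε k / lam k with hσdef
  have hσ0 : ∀ k, 0 ≤ σ k := fun k => le_of_lt (div_pos (hε0 k) (hlam0 k))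
  have hσle : ∀ k, σ k ≤ ε k := fun k => div_le_self (le_of_lt (hε0 k)) (hlam1 k)
  have habs : Tendsto (fun k : ℕ => |eval (x k) g|) atTop (𝓝 0) := by
    have := hxg.abs
    simpa using this
  have hεtend : Tendsto ε atTop (𝓝 0) := by
    have h2 : Tendsto (fun k : ℕ => 1 / (k + 1 : ℝ)) atTop (𝓝 0) :=
      tendsto_one_div_add_atTop_nhds_zero_nat
    simpa [hεdef] using habs.add h2
  have hσtend : Tendsto σ atTop (𝓝 0) := squeeze_zero hσ0 hσle hεtend
  have EK : ∀ k, ∃ y, y ∈ C ∧ |eval y g| ≤ |eval (x k) g| ∧ ‖y - x k‖ ≤ lam k ∧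
      ∀ z ∈ C, |eval y g| - σ k * ‖z - y‖ ≤ |eval z g| := by
    intro k
    have hxC : x k ∈ C := le_trans hr_le_δ (hxh k)
    have hfx : |eval (x k) g| ≤ ε k := by
      have h1 : (0:ℝ) < 1 / (k + 1 : ℝ) := by positivity
      simp only [hεdef]
      linarith
    exact ekeland_lite (fun z => |eval z g|) C ((continuous_evalPoly g).abs) hCclosed
      (fun z _ => abs_nonneg _) (x k) hxC (ε k) (lam k) (hε0 k) (hlam0 k) hfx
  choose y hyC hyg hydist hyek using EK
  have hyCle : ∀ k, r ≤ |eval (y k) h| := fun k => hyC k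
  have hynorm : Tendsto (fun k => ‖y k‖) atTop atTop := by
    apply tendsto_atTop_mono (f := fun k => ‖x k‖ / 2 - 1)
    · intro k
      show ‖x k‖ / 2 - 1 ≤ ‖y k‖
      have h1 : ‖x k‖ ≤ ‖x k - y k‖ + ‖y k‖ := by
        calc ‖x k‖ = ‖(x k - y k) + y k‖ := by congr 1; abel
          _ ≤ ‖x k - y k‖ + ‖y k‖ := norm_add_le _ _
      have h2 : ‖x k - y k‖ ≤ lam k := by
        rw [norm_sub_rev]
        exact hydist k
      have h3 : lam k = 1 + ‖x k‖ / 2 := rfl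
      rw [h3] at h2
      linarith [h1, h2]
    · have h1 : Tendsto (fun k => ‖x k‖ / 2) atTop atTop :=
        hxnorm.atTop_div_const two_pos
      simpa [sub_eq_add_neg] using tendsto_atTop_add_const_right atTop (-1 : ℝ) h1
  have hyG0 : Tendsto (fun k => eval (y k) g) atTop (𝓝 0) := by
    refine squeeze_zero_norm (fun k => ?_) habs
    rw [Real.norm_eq_abs]
    exact hyg k
  have hyGne : ∀ k, eval (y k) g ≠ 0 := by
    intro k hk
    have hH := hzero _ hk
    have h1 := hyCle k
    rw [hH, abs_zero] at h1
    linarith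
  have freq : (∃ᶠ k in atTop, r < |eval (y k) h|) ∨
      (∃ᶠ k in atTop, eval (y k) h = r) ∨ (∃ᶠ k in atTop, eval (y k) h = -r) := by
    by_contra hcon
    push_neg at hcon
    obtain ⟨f1, f2, f3⟩ := hcon
    obtain ⟨k, h1, h2, h3⟩ := ((f1.and (f2.and f3)).exists)
    have heq : |eval (y k) h| = r := le_antisymm h1 (hyCle k)
    rcases (abs_eq (le_of_lt hr_pos)).1 heq with h4 | h4
    · exact h2 h4
    · exact h3 h4
  rcases freq with hf | hf | hf
  · obtain ⟨φ, hφmono, hφP⟩ := extraction_of_frequently_atTop hf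
    apply hKg
    refine ⟨0, fun m => y (φ m), ?_, ?_, ?_⟩
    · exact hynorm.comp hφmono.tendsto_atTop
    · exact hyG0.comp hφmono.tendsto_atTop
    · have hb : ∀ m, ‖polyGrad g (y (φ m))‖ ≤ σ (φ m) := fun m =>
        case_interior g h r (σ (φ m)) (y (φ m)) (hσ0 _) (hφP m) (hyGne _)
          (fun z hz => hyek (φ m) z hz)
      exact squeeze_zero (fun m => norm_nonneg _) hb (hσtend.comp hφmono.tendsto_atTop)
  · obtain ⟨φ, hφmono, hφP⟩ := extraction_of_frequently_atTop hf
    obtain ⟨hreg, hnoseq⟩ := hlev' r (ne_of_gt hr_pos) (by rwa [abs_of_pos hr_pos])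
    apply hnoseq
    refine ⟨0, fun m => y (φ m), hφP, hynorm.comp hφmono.tendsto_atTop,
      hyG0.comp hφmono.tendsto_atTop, ?_⟩
    have hb : ∀ m, ‖restrictedGrad g h (y (φ m))‖ ≤ σ (φ m) := by
      intro m
      have habs2 : |eval (y (φ m)) h| = r := by rw [hφP m, abs_of_pos hr_pos]
      apply case_boundary g h (σ (φ m)) (y (φ m)) (hσ0 _)
        (by rw [hφP m]; exact ne_of_gt hr_pos) (hreg _ (hφP m)) (hyGne _)
      intro z hz
      apply hyek (φ m) z
      show r ≤ |eval z h|
      rw [habs2] at hz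
      exact hz
    exact squeeze_zero (fun m => norm_nonneg _) hb (hσtend.comp hφmono.tendsto_atTop)
  · obtain ⟨φ, hφmono, hφP⟩ := extraction_of_frequently_atTop hf
    obtain ⟨hreg, hnoseq⟩ := hlev' (-r) (by simpa using ne_of_gt hr_pos)
      (by rw [abs_neg, abs_of_pos hr_pos]; exact hr_lt_r0)
    apply hnoseq
    refine ⟨0, fun m => y (φ m), hφP, hynorm.comp hφmono.tendsto_atTop,
      hyG0.comp hφmono.tendsto_atTop, ?_⟩
    have hb : ∀ m, ‖restrictedGrad g h (y (φ m))‖ ≤ σ (φ m) := by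
      intro m
      have habs2 : |eval (y (φ m)) h| = r := by
        rw [hφP m, abs_neg, abs_of_pos hr_pos]
      apply case_boundary g h (σ (φ m)) (y (φ m)) (hσ0 _)
        (by rw [hφP m]; simpa using ne_of_gt hr_pos) (hreg _ (hφP m)) (hyGne _)
      intro z hz
      apply hyek (φ m) z
      show r ≤ |eval z h|
      rw [habs2] at hz
      exact hz
    exact squeeze_zero (fun m => norm_nonneg _) hb (hσtend.comp hφmono.tendsto_atTop)
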